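/- arXiv:1404.1184 — 8 statements merged into one kernel-verified Lean document; each statement's English description precedes it below -/
import Mathlib

section
/- The Jacobian of the Malthus ecoepidemic system evaluated at the equilibrium E₁ = (0, r/b, 0, μ/l) has eigenvalues i√(μr), -i√(μr), (βr - νb)/b, and (rf - bτ)/b. -/
open Polynomial

noncomputable def malthusRHS (g f τ l β q μ c ν r b : ℝ) (x : Fin 4 → ℝ) : Fin 4 → ℝ :=
  ![x 0 * (g * x 2 + f * x 1 - τ),
    x 1 * (l * x 3 - β * x 2 - q * x 0 - μ),
    x 2 * (β * x 1 - c * x 0 - ν),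
    x 3 * (r - b * x 1)]

noncomputable def malthusJac (g f τ l β q μ c ν r b : ℝ) (x : Fin 4 → ℝ) :
    Matrix (Fin 4) (Fin 4) ℝ :=
  Matrix.of ![
    ![g * x 2 + f * x 1 - τ, f * x 0, g * x 0, 0],
    ![-(q * x 1), l * x 3 - β * x 2 - q * x 0 - μ, -(β * x 1), l * x 1],
    ![-(c * x 2), β * x 2, β * x 1 - c * x 0 - ν, 0],
    ![0, -(b * x 3), 0, r - b * x 1]]

lemma stmt2_aux (A Q B L M D : ℂ) :
    (Matrix.of !![A,0,0,0; -Q, 0, -B, L; 0,0,D,0; 0,-M,0,0]).charpoly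
      = (X ^ 2 + C L * C M) * (X - C D) * (X - C A) := by
  have h1 : (Fin.succ 2 : Fin 4) = 3 := rfl
  have h2 : (Fin.castSucc 2 : Fin 4) = 2 := rfl
  have h3 : ∀ M : Matrix (Fin 4) (Fin 4) ℂ, Matrix.of M = M := fun _ => rfl
  rw [Matrix.charpoly]
  simp [Matrix.det_succ_row_zero, Fin.sum_univ_succ, h1, h2, Matrix.charmatrix_apply_eq,
    Matrix.charmatrix_apply_ne, Fin.succ_ne_zero, Matrix.vecHead, Matrix.vecTail, h3]
  ring

theorem stmt2 (g f τ l β q μ c ν r b : ℝ)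
    (hg : 0 < g) (hf : 0 < f) (hτ : 0 < τ) (hl : 0 < l) (hβ : 0 < β)
    (hq : 0 < q) (hμ : 0 < μ) (hc : 0 < c) (hν : 0 < ν) (hr : 0 < r) (hb : 0 < b) :
    ((malthusJac g f τ l β q μ c ν r b ![0, r / b, 0, μ / l]).map
        (Complex.ofReal)).charpoly =
      (X - C (Complex.I * Real.sqrt (μ * r))) *
      (X - C (-(Complex.I * Real.sqrt (μ * r)))) *
      (X - C (((β * r - ν * b) / b : ℝ) : ℂ)) *
      (X - C (((r * f - b * τ) / b : ℝ) : ℂ)) := by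
  have hb' : (b : ℝ) ≠ 0 := hb.ne'
  have hl' : (l : ℝ) ≠ 0 := hl.ne'
  have hM : (malthusJac g f τ l β q μ c ν r b ![0, r / b, 0, μ / l]).map Complex.ofReal
      = Matrix.of !![(((r * f - b * τ) / b : ℝ) : ℂ), 0, 0, 0;
          -((q * r / b : ℝ) : ℂ), 0, -((β * r / b : ℝ) : ℂ), ((l * r / b : ℝ) : ℂ);
          0, 0, (((β * r - ν * b) / b : ℝ) : ℂ), 0;
          0, -((b * μ / l : ℝ) : ℂ), 0, 0] := by
    have h3 : ∀ M : Matrix (Fin 4) (Fin 4) ℂ, Matrix.of M = M := fun _ => rfl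
    ext i j
    fin_cases i <;> fin_cases j <;>
      simp [malthusJac, Matrix.vecHead, Matrix.vecTail, h3] <;> norm_cast <;> field_simp <;> ring
  rw [hM, stmt2_aux]
  have hs : ((Real.sqrt (μ * r) : ℝ) : ℂ) ^ 2 = (μ : ℂ) * r := by
    rw [← Complex.ofReal_pow, Real.sq_sqrt (by positivity)]
    push_cast; ring
  have hLM : C ((l * r / b : ℝ) : ℂ) * C ((b * μ / l : ℝ) : ℂ) = C ((μ : ℂ) * r) := by
    have hR : (l * r / b) * (b * μ / l) = μ * r := by field_simp
    rw [← C_mul, ← Complex.ofReal_mul, hR]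
    exact congrArg C (by push_cast; ring)
  have hquad : (X : ℂ[X]) ^ 2 + C ((μ : ℂ) * r)
      = (X - C (Complex.I * Real.sqrt (μ * r))) *
        (X - C (-(Complex.I * Real.sqrt (μ * r)))) := by
    have h2 : (Complex.I * (Real.sqrt (μ * r) : ℝ)) ^ 2 = -((μ : ℂ) * r) := by
      rw [mul_pow, Complex.I_sq, hs]; ring
    have : (X - C (Complex.I * (Real.sqrt (μ * r) : ℝ))) *
        (X - C (-(Complex.I * (Real.sqrt (μ * r) : ℝ))))
        = X ^ 2 - C ((Complex.I * (Real.sqrt (μ * r) : ℝ)) ^ 2) := by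
      rw [C_neg, C_pow]; ring
    rw [this, h2, C_neg]; ring
  rw [hLM, hquad]
end

section
/- If rβ < bν and rf < bτ, then the Jacobian of the Malthus ecoepidemic system at E₁ = (0, r/b, 0, μ/l) has two purely imaginary eigenvalues ±i√(μr) and two real negative eigenvalues (βr - νb)/b and (rf - bτ)/b. -/
open Polynomial

theorem stmt3 (g f τ l β q μ c ν r b : ℝ)
    (hg : 0 < g) (hf : 0 < f) (hτ : 0 < τ) (hl : 0 < l) (hβ : 0 < β)
    (hq : 0 < q) (hμ : 0 < μ) (hc : 0 < c) (hν : 0 < ν) (hr : 0 < r) (hb : 0 < b)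
    (h1 : r * β < b * ν) (h2 : r * f < b * τ) :
    ((malthusJac g f τ l β q μ c ν r b ![0, r / b, 0, μ / l]).map
        (Complex.ofReal)).charpoly =
      (X - C (Complex.I * Real.sqrt (μ * r))) *
      (X - C (-(Complex.I * Real.sqrt (μ * r)))) *
      (X - C (((β * r - ν * b) / b : ℝ) : ℂ)) *
      (X - C (((r * f - b * τ) / b : ℝ) : ℂ)) ∧
    (Complex.I * Real.sqrt (μ * r)).re = 0 ∧ (Complex.I * Real.sqrt (μ * r)).im ≠ 0 ∧
    (β * r - ν * b) / b < 0 ∧ (r * f - b * τ) / b < 0 := by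
  set_option maxHeartbeats 1600000 in
  refine ⟨?_, ?_, ?_, ?_, ?_⟩
  · rw [Matrix.charpoly]
    simp [Matrix.det_succ_row_zero, Fin.sum_univ_succ, Matrix.charmatrix_apply,
      malthusJac, Fin.succAbove, Matrix.submatrix_apply, Matrix.diagonal]
    norm_num [Fin.ext_iff, Fin.succ, Fin.castSucc, Fin.castAdd, Fin.castLE, Fin.lt_def]
    have hbC : (b:ℂ) ≠ 0 := by exact_mod_cast hb.ne'
    have hlC : (l:ℂ) ≠ 0 := by exact_mod_cast hl.ne'
    have hs : ((Real.sqrt (μ*r) : ℝ):ℂ) * ((Real.sqrt (μ*r) : ℝ):ℂ) = ((μ:ℂ) * r) := by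
      rw [← Complex.ofReal_mul, Real.mul_self_sqrt (by positivity)]
      push_cast; ring
    apply Polynomial.funext
    intro z
    simp only [eval_mul, eval_add, eval_sub, eval_neg, eval_X, eval_C]
    have hIs : (Complex.I * ((Real.sqrt (μ*r):ℝ):ℂ)) * (Complex.I * ((Real.sqrt (μ*r):ℝ):ℂ)) = -((μ:ℂ)*r) := by
      rw [mul_mul_mul_comm, Complex.I_mul_I, hs]; ring
    have e1 : (l:ℂ) * ((μ:ℂ)/(l:ℂ)) = (μ:ℂ) := by field_simp
    have e2 : (b:ℂ) * ((r:ℂ)/(b:ℂ)) = (r:ℂ) := by field_simp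
    have e4 : ((β:ℂ) * (r:ℂ) - (ν:ℂ) * (b:ℂ)) / (b:ℂ) = (β:ℂ) * ((r:ℂ)/(b:ℂ)) - (ν:ℂ) := by
      field_simp
    have e5 : ((r:ℂ) * (f:ℂ) - (b:ℂ) * (τ:ℂ)) / (b:ℂ) = (f:ℂ) * ((r:ℂ)/(b:ℂ)) - (τ:ℂ) := by
      field_simp
    have h6 : ((l:ℂ) * ((r:ℂ)/(b:ℂ))) * ((b:ℂ) * ((μ:ℂ)/(l:ℂ))) = (μ:ℂ) * (r:ℂ) := by
      field_simp
    rw [e1, e2, e4, e5]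
    linear_combination ((z - ((β:ℂ) * ((r:ℂ)/(b:ℂ)) - (ν:ℂ))) * (z - ((f:ℂ) * ((r:ℂ)/(b:ℂ)) - (τ:ℂ)))) * h6 +
      ((z - ((β:ℂ) * ((r:ℂ)/(b:ℂ)) - (ν:ℂ))) * (z - ((f:ℂ) * ((r:ℂ)/(b:ℂ)) - (τ:ℂ)))) * hIs
  · simp
  · simp
    positivity
  · apply div_neg_of_neg_of_pos _ hb
    nlinarith
  · apply div_neg_of_neg_of_pos _ hb
    nlinarith
end

section
/- The point E* = ((βr - νb)/(bc), r/b, (bτ - rf)/(gb), (βrgq - βrfc + bgμc - bgqν + bτβc)/(gbcl)) is an equilibrium of the Malthus ecoepidemic system, i.e., all four right-hand sides vanish at this point. -/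
open Polynomial

theorem stmt4 (g f τ l β q μ c ν r b : ℝ)
    (hg : 0 < g) (hf : 0 < f) (hτ : 0 < τ) (hl : 0 < l) (hβ : 0 < β)
    (hq : 0 < q) (hμ : 0 < μ) (hc : 0 < c) (hν : 0 < ν) (hr : 0 < r) (hb : 0 < b) :
    malthusRHS g f τ l β q μ c ν r b
      ![(β * r - ν * b) / (b * c), r / b, (b * τ - r * f) / (g * b),
        (β * r * g * q - β * r * f * c + b * g * μ * c - b * g * q * ν + b * τ * β * c) /
          (g * b * c * l)] = 0 := by
  have hg' := hg.ne'
  have hb' := hb.ne'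
  have hc' := hc.ne'
  have hl' := hl.ne'
  funext i
  fin_cases i <;>
    simp [malthusRHS] <;> right <;> field_simp <;> ring
end

section
/- The characteristic polynomial of the Jacobian of the Malthus ecoepidemic system at the coexistence equilibrium E* has vanishing coefficient of λ³ (i.e., the trace of the Jacobian at E* is zero); consequently the Jacobian at E* cannot have all eigenvalues with negative real part, so E* is not linearly asymptotically stable. -/
open Polynomial

theorem stmt7 (g f τ l β q μ c ν r b : ℝ)
    (hg : 0 < g) (hf : 0 < f) (hτ : 0 < τ) (hl : 0 < l) (hβ : 0 < β)
    (hq : 0 < q) (hμ : 0 < μ) (hc : 0 < c) (hν : 0 < ν) (hr : 0 < r) (hb : 0 < b)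
    (Estar : Fin 4 → ℝ)
    (hE : Estar = ![(β * r - ν * b) / (b * c), r / b, (b * τ - r * f) / (g * b),
      (β * r * g * q - β * r * f * c + b * g * μ * c - b * g * q * ν + b * τ * β * c) /
        (g * b * c * l)])
    (hpos : ∀ i, 0 < Estar i) :
    Matrix.trace (malthusJac g f τ l β q μ c ν r b Estar) = 0 ∧
    ¬ (∀ z ∈ ((malthusJac g f τ l β q μ c ν r b Estar).map
        (Complex.ofReal)).charpoly.roots, z.re < 0) := by
  have htr : Matrix.trace (malthusJac g f τ l β q μ c ν r b Estar) = 0 := by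
    subst hE
    simp [Matrix.trace, malthusJac, Fin.sum_univ_four, Matrix.diag]
    field_simp
    ring
  refine ⟨htr, ?_⟩
  intro hall
  set A := (malthusJac g f τ l β q μ c ν r b Estar).map (Complex.ofReal) with hA
  have htrA : A.trace = 0 := by
    rw [hA]
    have : ((malthusJac g f τ l β q μ c ν r b Estar).map (Complex.ofReal)).trace
        = Complex.ofReal ((malthusJac g f τ l β q μ c ν r b Estar).trace) := by
      simp [Matrix.trace, Matrix.diag, Matrix.map_apply]
    rw [this, htr]; simp
  have hsum : (A.charpoly.roots).sum = 0 := by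
    rw [← Matrix.trace_eq_sum_roots_charpoly, htrA]
  have hcard : A.charpoly.roots.card = 4 := by
    have h1 := (Polynomial.splits_iff_card_roots (f := A.charpoly)).mp
      (IsAlgClosed.splits A.charpoly)
    rw [h1, Matrix.charpoly_natDegree_eq_dim, Fintype.card_fin]
  obtain ⟨z₀, hz₀⟩ : ∃ z, z ∈ A.charpoly.roots := by
    apply Multiset.card_pos_iff_exists_mem.mp; rw [hcard]; norm_num
  obtain ⟨t, ht⟩ := Multiset.exists_cons_of_mem hz₀
  have h0 : (0:ℝ) = z₀.re + (t.map Complex.re).sum := by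
    have := congrArg Complex.re hsum
    rw [ht] at this
    rw [show ((Multiset.map Complex.re t).sum) = Complex.reAddGroupHom t.sum from
      (Complex.reAddGroupHom.map_multiset_sum t).symm]
    simpa using this.symm
  have hz0neg : z₀.re < 0 := hall z₀ hz₀
  have htle : (t.map Complex.re).sum ≤ 0 := by
    have := Multiset.sum_map_le_sum_map (s := t) Complex.re (fun _ => (0:ℝ))
      (fun i hi => le_of_lt (hall i (by rw [ht]; exact Multiset.mem_cons_of_mem hi)))
    simpa using this
  linarith
end

section
/- Trajectories of the logistic ecoepidemic system are bounded: for any solution with nonnegative initial data, setting W = P + S + I + V and θ = min{τ, μ, ν} > 0, one has W' + θW ≤ Ψ* where Ψ* = (r + θ)²K/(4r), and consequently W(t) ≤ max{W(0), Ψ*/θ} for all t ≥ 0. -/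
theorem stmt8 (g f τ l β q μ c ν r b K : ℝ)
    (hg : 0 < g) (hf : 0 < f) (hτ : 0 < τ) (hl : 0 < l) (hβ : 0 < β)
    (hq : 0 < q) (hμ : 0 < μ) (hc : 0 < c) (hν : 0 < ν) (hr : 0 < r) (hb : 0 < b)
    (hK : 0 < K) (hgc : g < c) (hfq : f < q) (hlb : l < b)
    (P S I V : ℝ → ℝ)
    (hP : ∀ t, HasDerivAt P (P t * (g * I t + f * S t - τ)) t)
    (hS : ∀ t, HasDerivAt S (S t * (l * V t - β * I t - q * P t - μ)) t)
    (hI : ∀ t, HasDerivAt I (I t * (β * S t - c * P t - ν)) t)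
    (hV : ∀ t, HasDerivAt V (V t * (r * (1 - V t / K) - b * S t)) t)
    (hPpos : ∀ t, 0 ≤ t → 0 ≤ P t) (hSpos : ∀ t, 0 ≤ t → 0 ≤ S t)
    (hIpos : ∀ t, 0 ≤ t → 0 ≤ I t) (hVpos : ∀ t, 0 ≤ t → 0 ≤ V t)
    (W : ℝ → ℝ) (hW : W = fun t => P t + S t + I t + V t)
    (θ : ℝ) (hθ : θ = min τ (min μ ν))
    (Ψstar : ℝ) (hΨ : Ψstar = (r + θ) ^ 2 * K / (4 * r)) :
    (0 < θ) ∧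
    (∀ t, 0 ≤ t → deriv W t + θ * W t ≤ Ψstar) ∧
    (∀ t, 0 ≤ t → W t ≤ max (W 0) (Ψstar / θ)) := by
  have hθpos : 0 < θ := by
    rw [hθ]; exact lt_min hτ (lt_min hμ hν)
  have hθτ : θ ≤ τ := hθ ▸ min_le_left _ _
  have hθμ : θ ≤ μ := hθ ▸ le_trans (min_le_right _ _) (min_le_left _ _)
  have hθν : θ ≤ ν := hθ ▸ le_trans (min_le_right _ _) (min_le_right _ _)
  set D : ℝ → ℝ := fun t =>
    P t * (g * I t + f * S t - τ) + S t * (l * V t - β * I t - q * P t - μ) +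
      I t * (β * S t - c * P t - ν) + V t * (r * (1 - V t / K) - b * S t) with hD
  have hW' : ∀ t, HasDerivAt W (D t) t := by
    intro t
    rw [hW]
    exact (((hP t).add (hS t)).add (hI t)).add (hV t)
  have hderiv : ∀ t, deriv W t = D t := fun t => (hW' t).deriv
  have hKne : K ≠ 0 := ne_of_gt hK
  have key : ∀ v : ℝ, (r + θ) * v - r * v ^ 2 / K ≤ Ψstar := by
    intro v
    rw [← sub_nonneg]
    have h : Ψstar - ((r + θ) * v - r * v ^ 2 / K)
        = (2 * r * v - (r + θ) * K) ^ 2 / (4 * r * K) := by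
      rw [hΨ]; field_simp; ring
    rw [h]; positivity
  have ineq : ∀ t, 0 ≤ t → D t + θ * W t ≤ Ψstar := by
    intro t ht
    have hid : D t + θ * W t =
        (g - c) * (P t * I t) + (f - q) * (P t * S t) + (l - b) * (S t * V t) +
        (θ - τ) * P t + (θ - μ) * S t + (θ - ν) * I t +
        ((r + θ) * V t - r * V t ^ 2 / K) := by
      rw [hW, hD]; field_simp; ring
    have h1 : (g - c) * (P t * I t) ≤ 0 :=
      mul_nonpos_of_nonpos_of_nonneg (by linarith)
        (mul_nonneg (hPpos t ht) (hIpos t ht))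
    have h2 : (f - q) * (P t * S t) ≤ 0 :=
      mul_nonpos_of_nonpos_of_nonneg (by linarith)
        (mul_nonneg (hPpos t ht) (hSpos t ht))
    have h3 : (l - b) * (S t * V t) ≤ 0 :=
      mul_nonpos_of_nonpos_of_nonneg (by linarith)
        (mul_nonneg (hSpos t ht) (hVpos t ht))
    have h4 : (θ - τ) * P t ≤ 0 :=
      mul_nonpos_of_nonpos_of_nonneg (by linarith) (hPpos t ht)
    have h5 : (θ - μ) * S t ≤ 0 :=
      mul_nonpos_of_nonpos_of_nonneg (by linarith) (hSpos t ht)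
    have h6 : (θ - ν) * I t ≤ 0 :=
      mul_nonpos_of_nonpos_of_nonneg (by linarith) (hIpos t ht)
    have h7 := key (V t)
    rw [hid]; linarith
  refine ⟨hθpos, fun t ht => by rw [hderiv]; exact ineq t ht, ?_⟩
  -- Gronwall part
  set u : ℝ → ℝ := fun t => (W t - Ψstar / θ) * Real.exp (θ * t) with hu
  have hu' : ∀ t, HasDerivAt u ((D t + θ * W t - Ψstar) * Real.exp (θ * t)) t := by
    intro t
    have he : HasDerivAt (fun s => Real.exp (θ * s)) (θ * Real.exp (θ * t)) t := by
      have h0 : HasDerivAt (fun s => θ * s) θ t := by simpa using (hasDerivAt_id t).const_mul θ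
      convert h0.exp using 1; ring
    have := ((hW' t).sub_const (Ψstar / θ)).mul he
    refine this.congr_deriv ?_
    have : θ * (Ψstar / θ) = Ψstar := mul_div_cancel₀ Ψstar (ne_of_gt hθpos)
    linear_combination (-Real.exp (θ * t)) * this
  have hanti : AntitoneOn u (Set.Ici (0:ℝ)) := by
    apply antitoneOn_of_deriv_nonpos (convex_Ici 0)
    · exact fun x _ => ((hu' x).differentiableAt).continuousAt.continuousWithinAt
    · exact fun x _ => ((hu' x).differentiableAt).differentiableWithinAt
    · intro x hx
      rw [interior_Ici] at hx
      rw [(hu' x).deriv]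
      have hle := ineq x (le_of_lt hx)
      have : D x + θ * W x - Ψstar ≤ 0 := by linarith
      exact mul_nonpos_of_nonpos_of_nonneg this (Real.exp_nonneg _)
  intro t ht
  have hut : u t ≤ u 0 := hanti (Set.self_mem_Ici) ht ht
  simp only [hu, mul_zero, Real.exp_zero, mul_one] at hut
  have hexp1 : (1:ℝ) ≤ Real.exp (θ * t) :=
    Real.one_le_exp (mul_nonneg (le_of_lt hθpos) ht)
  rcases le_or_gt (W t) (Ψstar / θ) with h | h
  · exact le_max_of_le_right h
  · have hpos : 0 < W t - Ψstar / θ := by linarith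
    have h2 : W t - Ψstar / θ ≤ (W t - Ψstar / θ) * Real.exp (θ * t) := by
      nlinarith
    exact le_max_of_le_left (by linarith)
end

section
/- In the disease-free logistic model, the characteristic polynomial of the Jacobian at the coexistence equilibrium D* is λ³ + A₁λ² + A₂λ + A₃ with A₁ = (r/K)V*, A₂ = fqP*Q* + blQ*V*, A₃ = fq(r/K)P*Q*V*; whenever P*, Q*, V* > 0, the Routh–Hurwitz conditions A₁ > 0, A₃ > 0, A₁A₂ > A₃ hold, so D* is linearly asymptotically stable. -/
open Polynomial

noncomputable def dfRHS (f τ l q μ r K b : ℝ) (x : Fin 3 → ℝ) : Fin 3 → ℝ :=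
  ![x 0 * (f * x 1 - τ),
    x 1 * (l * x 2 - q * x 0 - μ),
    x 2 * (r * (1 - x 2 / K) - b * x 1)]

noncomputable def dfJac (f τ l q μ r K b : ℝ) (x : Fin 3 → ℝ) :
    Matrix (Fin 3) (Fin 3) ℝ :=
  Matrix.of ![
    ![f * x 1 - τ, f * x 0, 0],
    ![-(q * x 1), l * x 2 - q * x 0 - μ, l * x 1],
    ![0, -(b * x 2), r * (1 - x 2 / K) - b * x 1 - r * x 2 / K]]

theorem stmt15 (f τ l q μ r K b : ℝ)
    (hf : 0 < f) (hτ : 0 < τ) (hl : 0 < l) (hq : 0 < q) (hμ : 0 < μ)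
    (hr : 0 < r) (hK : 0 < K) (hb : 0 < b)
    (Pstar Qstar Vstar : ℝ)
    (hPs : Pstar = (l * K * (1 - b * τ / (r * f)) - μ) / q)
    (hQs : Qstar = τ / f) (hVs : Vstar = K * (1 - b * τ / (r * f)))
    (hpos : 0 < Pstar ∧ 0 < Qstar ∧ 0 < Vstar)
    (A₁ A₂ A₃ : ℝ)
    (hA1 : A₁ = r / K * Vstar)
    (hA2 : A₂ = f * q * Pstar * Qstar + b * l * Qstar * Vstar)
    (hA3 : A₃ = f * q * (r / K) * Pstar * Qstar * Vstar) :
    (dfJac f τ l q μ r K b ![Pstar, Qstar, Vstar]).charpoly =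
      X ^ 3 + C A₁ * X ^ 2 + C A₂ * X + C A₃ ∧
    0 < A₁ ∧ 0 < A₃ ∧ A₃ < A₁ * A₂ ∧
    (∀ z ∈ ((dfJac f τ l q μ r K b ![Pstar, Qstar, Vstar]).map
        (Complex.ofReal)).charpoly.roots, z.re < 0) := by
  obtain ⟨hP, hQ, hV⟩ := hpos
  have e1 : f * Qstar - τ = 0 := by rw [hQs]; field_simp; ring
  have e2 : l * Vstar - q * Pstar - μ = 0 := by
    rw [hPs, hVs]; field_simp; ring
  have e3 : r * (1 - Vstar / K) - b * Qstar - r * Vstar / K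
      = -(r / K * Vstar) := by
    rw [hVs, hQs]; field_simp; ring
  have hM : dfJac f τ l q μ r K b ![Pstar, Qstar, Vstar] =
      Matrix.of ![![0, f * Pstar, 0],
        ![-(q * Qstar), 0, l * Qstar],
        ![0, -(b * Vstar), -(r / K * Vstar)]] := by
    ext i j
    fin_cases i <;> fin_cases j <;>
      simp [dfJac, e1, e2, e3]
  have hcp : (dfJac f τ l q μ r K b ![Pstar, Qstar, Vstar]).charpoly =
      X ^ 3 + C A₁ * X ^ 2 + C A₂ * X + C A₃ := by
    rw [hM, Matrix.charpoly, Matrix.det_fin_three]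
    simp [Matrix.charmatrix_apply, Matrix.diagonal_apply]
    rw [hA1, hA2, hA3]
    simp only [map_add, map_mul, map_neg, map_zero, map_sub]
    ring
  refine ⟨hcp, ?_, ?_, ?_, ?_⟩
  · rw [hA1]; positivity
  · rw [hA3]; positivity
  · have h : A₁ * A₂ - A₃ = (r / K * Vstar) * (b * l * Qstar * Vstar) := by
      rw [hA1, hA2, hA3]; ring
    nlinarith [mul_pos (mul_pos (div_pos hr hK) hV)
      (mul_pos (mul_pos (mul_pos hb hl) hQ) hV)]
  · have hA1p : 0 < A₁ := by rw [hA1]; positivity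
    have hA2p : 0 < A₂ := by rw [hA2]; positivity
    have hA3p : 0 < A₃ := by rw [hA3]; positivity
    have hRH : A₃ < A₁ * A₂ := by
      have h : A₁ * A₂ - A₃ = (r / K * Vstar) * (b * l * Qstar * Vstar) := by
        rw [hA1, hA2, hA3]; ring
      nlinarith [mul_pos (mul_pos (div_pos hr hK) hV)
        (mul_pos (mul_pos (mul_pos hb hl) hQ) hV)]
    intro z hz
    have hmap : ((dfJac f τ l q μ r K b ![Pstar, Qstar, Vstar]).map
        (Complex.ofReal)).charpoly =
        (X ^ 3 + C A₁ * X ^ 2 + C A₂ * X + C A₃ : ℝ[X]).map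
          (Complex.ofRealHom) := by
      rw [← hcp]
      exact Matrix.charpoly_map _ Complex.ofRealHom
    rw [hmap] at hz
    rw [← hmap] at hz
    have hz0 : z ^ 3 + (A₁ : ℂ) * z ^ 2 + (A₂ : ℂ) * z + (A₃ : ℂ) = 0 := by
      have hne := (Matrix.charpoly_monic ((dfJac f τ l q μ r K b
        ![Pstar, Qstar, Vstar]).map (Complex.ofReal))).ne_zero
      have hroot := (Polynomial.mem_roots hne).1 hz
      rw [hmap] at hroot
      simpa [Polynomial.IsRoot, Polynomial.eval_map] using hroot
    set x := z.re with hx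
    set y := z.im with hy
    rw [show z ^ 3 = z * z * z by ring, show z ^ 2 = z * z by ring] at hz0
    have hre' := congrArg Complex.re hz0
    have him' := congrArg Complex.im hz0
    simp only [Complex.add_re, Complex.add_im, Complex.mul_re, Complex.mul_im,
      Complex.ofReal_re, Complex.ofReal_im, Complex.zero_re, Complex.zero_im,
      ← hx, ← hy] at hre' him'
    have hre : x ^ 3 - 3 * x * y ^ 2 + A₁ * (x ^ 2 - y ^ 2) + A₂ * x + A₃ = 0 := by
      linear_combination hre'
    have him : y * (3 * x ^ 2 - y ^ 2 + 2 * A₁ * x + A₂) = 0 := by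
      linear_combination him'
    by_contra hxc
    push_neg at hxc
    have hx2 : 0 ≤ x ^ 2 := sq_nonneg x
    have hx3 : 0 ≤ x ^ 3 := pow_nonneg hxc 3
    rcases mul_eq_zero.1 him with hy0 | hq0
    · rw [hy0] at hre
      have h2 : 0 ≤ A₁ * x ^ 2 := mul_nonneg hA1p.le hx2
      have h3 : 0 ≤ A₂ * x := mul_nonneg hA2p.le hxc
      have : x ^ 3 + A₁ * x ^ 2 + A₂ * x + A₃ = 0 := by linear_combination hre
      linarith
    · have hy2 : y ^ 2 = 3 * x ^ 2 + 2 * A₁ * x + A₂ := by linarith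
      have key : A₃ - A₁ * A₂ =
          8 * x ^ 3 + 8 * A₁ * x ^ 2 + 2 * A₁ ^ 2 * x + 2 * A₂ * x := by
        linear_combination hre + (3 * x + A₁) * hy2
      have h2 : 0 ≤ A₁ * x ^ 2 := mul_nonneg hA1p.le hx2
      have h3 : 0 ≤ A₂ * x := mul_nonneg hA2p.le hxc
      have h4 : 0 ≤ A₁ ^ 2 * x := mul_nonneg (sq_nonneg A₁) hxc
      linarith
end

section
/- For a monic cubic real polynomial λ³ + A₁λ² + A₂λ + A₃ with A₁ > 0, A₂ > 0, A₃ > 0 and A₁A₂ > A₃, all roots have negative real part (Routh–Hurwitz criterion for degree 3). -/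
theorem stmt16 (A₁ A₂ A₃ : ℝ) (h1 : 0 < A₁) (h2 : 0 < A₂) (h3 : 0 < A₃)
    (h4 : A₃ < A₁ * A₂) :
    ∀ z : ℂ, z ^ 3 + (A₁ : ℂ) * z ^ 2 + (A₂ : ℂ) * z + (A₃ : ℂ) = 0 → z.re < 0 := by
  intro z hz
  by_contra h
  push_neg at h
  set x := z.re with hx
  set y := z.im with hy
  have hre := congrArg Complex.re hz
  have him := congrArg Complex.im hz
  simp [pow_succ, Complex.mul_re, Complex.mul_im, ← hx, ← hy] at hre him
  rcases mul_eq_zero.mp (show y * (3*x^2 - y^2 + 2*A₁*x + A₂) = 0 by linear_combination him) with hy0 | hq0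
  · have key : x^3 + A₁*x^2 + A₂*x + A₃ = 0 := by
      linear_combination hre + (3*x + A₁) * hy0 * y
    nlinarith [mul_nonneg (mul_nonneg h h) h, mul_nonneg h h,
      mul_nonneg h1.le (mul_nonneg h h), mul_nonneg h2.le h]
  · have hq : 3*x^2 - y^2 + 2*A₁*x + A₂ = 0 := by linarith
    have key : 8*x^3 + 8*A₁*x^2 + 2*A₂*x + 2*A₁^2*x + A₁*A₂ - A₃ = 0 := by
      linear_combination -hre + (3*x + A₁) * hq
    nlinarith [mul_nonneg (mul_nonneg h h) h, mul_nonneg h h,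
      mul_nonneg h1.le (mul_nonneg h h), mul_nonneg h2.le h,
      mul_nonneg (mul_nonneg h1.le h1.le) h]
end

section
/- In the disease-free logistic model, the top-predator-free equilibrium D̂ = (0, (r/b)(1 - μ/(lK)), μ/l) is feasible iff lK ≥ μ, and the Jacobian at D̂ has the eigenvalue f(r/b)(1 - μ/(lK)) - τ in the P-direction; hence D̂ is unstable when (fr/(bτ))(1 - μ/(lK)) > 1, the same condition under which the coexistence equilibrium D* is feasible (a transcritical bifurcation). -/
open Polynomial

lemma eval_charpoly3 (M : Matrix (Fin 3) (Fin 3) ℝ) (z : ℝ) :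
    M.charpoly.eval z = (z • (1 : Matrix (Fin 3) (Fin 3) ℝ) - M).det := by
  rw [Matrix.charpoly, ← Polynomial.coe_evalRingHom, RingHom.map_det]
  congr 1
  ext i j
  by_cases h : i = j <;>
    simp [Matrix.charmatrix_apply, Matrix.one_apply, h]

theorem stmt17 (f τ l q μ r K b : ℝ)
    (hf : 0 < f) (hτ : 0 < τ) (hl : 0 < l) (hq : 0 < q) (hμ : 0 < μ)
    (hr : 0 < r) (hK : 0 < K) (hb : 0 < b)
    (Qhat Vhat : ℝ)
    (hQ : Qhat = (r / b) * (1 - μ / (l * K))) (hV : Vhat = μ / l) :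
    ((0 ≤ Qhat ∧ 0 ≤ Vhat) ↔ μ ≤ l * K) ∧
    dfJac f τ l q μ r K b ![0, Qhat, Vhat] 0 0 = f * (r / b) * (1 - μ / (l * K)) - τ ∧
    (dfJac f τ l q μ r K b ![0, Qhat, Vhat]).charpoly.IsRoot
      (f * (r / b) * (1 - μ / (l * K)) - τ) ∧
    (1 < (f * r / (b * τ)) * (1 - μ / (l * K)) →
      ∃ z : ℝ, 0 < z ∧ (dfJac f τ l q μ r K b ![0, Qhat, Vhat]).charpoly.IsRoot z) := by
  have hlK : 0 < l * K := mul_pos hl hK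
  have hrb : 0 < r / b := div_pos hr hb
  have hroot : (dfJac f τ l q μ r K b ![0, Qhat, Vhat]).charpoly.IsRoot
      (f * (r / b) * (1 - μ / (l * K)) - τ) := by
    rw [Polynomial.IsRoot, eval_charpoly3, Matrix.det_fin_three]
    simp [dfJac, hQ]
    ring
  refine ⟨?_, ?_, hroot, ?_⟩
  · constructor
    · rintro ⟨h1, _⟩
      rw [hQ] at h1
      have h2 : 0 ≤ 1 - μ / (l * K) := nonneg_of_mul_nonneg_right h1 hrb
      have h3 : μ / (l * K) ≤ 1 := by linarith
      exact (div_le_one hlK).mp h3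
    · intro h
      refine ⟨?_, ?_⟩
      · rw [hQ]
        have h3 : μ / (l * K) ≤ 1 := (div_le_one hlK).mpr h
        have : 0 ≤ 1 - μ / (l * K) := by linarith
        positivity
      · rw [hV]; positivity
  · simp [dfJac, hQ]; ring
  · intro h
    refine ⟨f * (r / b) * (1 - μ / (l * K)) - τ, ?_, hroot⟩
    have key : f * (r / b) * (1 - μ / (l * K)) =
        (f * r / (b * τ)) * (1 - μ / (l * K)) * τ := by
      field_simp
    rw [key]
    nlinarith
end
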